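/- Let λ be a partition of m, μ a partition of n, O a multiset of powers of p summing to m, O' a multiset of powers of p summing to n, and s a nonnegative integer with p^s > m. Then m_{λ + p^s μ, O • p^s O'} = m_{λ,O} · m_{μ,O'}, where λ + p^s μ is the (entrywise) partition of m + p^s n, p^s O' is the multiset obtained by multiplying every element of O' by p^s, and O • p^s O' is the multiset union. -/

import Mathlib

open scoped BigOperators

/-! ## Brauer construction for representations of finite groups -/

section Brauer

variable {F : Type} [Field F] {G : Type} [Group G]
variable {V : Type} [AddCommGroup V] [Module F V]

/-- The submodule of `P`-fixed points of a representation. -/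
def repFixed (ρ : Representation F G V) (P : Subgroup G) : Submodule F V where
  carrier := {v | ∀ g ∈ P, ρ g v = v}
  add_mem' := by
    intro a b ha hb g hg
    simp [map_add, ha g hg, hb g hg]
  zero_mem' := by
    intro g hg
    simp
  smul_mem' := by
    intro c v hv g hg
    simp [map_smul, hv g hg]

/-- The relative trace map `Tr_Q^P` (as a bare function, summing over a set of
left coset representatives of `Q` in `P`). -/
noncomputable def relTrace [Finite G] (ρ : Representation F G V) (P Q : Subgroup G)
    (v : V) : V := by
  classical
  have : Fintype (P ⧸ Q.subgroupOf P) := Fintype.ofFinite _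
  exact ∑ x : P ⧸ Q.subgroupOf P, ρ ((Quotient.out x : ↥P) : G) v

/-- The subspace `Tr^P(M) = Σ_{Q < P} Tr_Q^P (M^Q)` (as a submodule of `V`). -/
noncomputable def brauerTraceSub [Finite G] (ρ : Representation F G V) (P : Subgroup G) :
    Submodule F V :=
  Submodule.span F {w | ∃ Q : Subgroup G, Q < P ∧ ∃ v ∈ repFixed ρ Q, w = relTrace ρ P Q v}

/-- The dimension of the Brauer construction `M(P) = M^P / Tr^P(M)`. -/
noncomputable def brauerDim [Finite G] (ρ : Representation F G V) (P : Subgroup G) : ℕ :=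
  Module.finrank F
    (↥(repFixed ρ P) ⧸ ((brauerTraceSub ρ P).comap (repFixed ρ P).subtype))

/-- `σ` is (isomorphic to) a direct summand of `ρ`: there is an equivariant split
injection of `σ` into `ρ`. -/
def IsRepSummand {W : Type} [AddCommGroup W] [Module F W]
    (ρ : Representation F G V) (σ : Representation F G W) : Prop :=
  ∃ (ι : W →ₗ[F] V) (π : V →ₗ[F] W),
    (∀ g w, ι (σ g w) = ρ g (ι w)) ∧ (∀ g v, π (ρ g v) = σ g (π v)) ∧ ∀ w, π (ι w) = w

/-- A representation is indecomposable: nonzero, and admitting no nontrivial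
decomposition into two invariant submodules. -/
def IsIndecomposableRep (ρ : Representation F G V) : Prop :=
  (∃ v : V, v ≠ 0) ∧
  ∀ A B : Submodule F V, (∀ g, ∀ v ∈ A, ρ g v ∈ A) → (∀ g, ∀ v ∈ B, ρ g v ∈ B) →
    A ⊓ B = ⊥ → A ⊔ B = ⊤ → A = ⊥ ∨ B = ⊥

/-- Isomorphism of representations. -/
def RepIso {W : Type} [AddCommGroup W] [Module F W]
    (ρ : Representation F G V) (σ : Representation F G W) : Prop :=
  ∃ e : V ≃ₗ[F] W, ∀ g v, e (ρ g v) = σ g (e v)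

end Brauer

/-! ## Compositions, partitions, tabloids and Young modules -/

section Young

/-- A composition of `n` as a finitely supported function `ℕ → ℕ` with sum `n`. -/
def IsCompositionFn (c : ℕ → ℕ) (n : ℕ) : Prop :=
  (Function.support c).Finite ∧ ∑ᶠ j, c j = n

/-- A partition of `n` as a finitely supported weakly decreasing function `ℕ → ℕ`
with sum `n`. -/
def IsPartitionFn (c : ℕ → ℕ) (n : ℕ) : Prop :=
  IsCompositionFn c n ∧ Antitone c

/-- A `p`-restricted partition: all successive differences (including the last
part) are `< p`. -/
def IsPRestrictedFn (p : ℕ) (c : ℕ → ℕ) : Prop := ∀ j, c j - c (j + 1) < p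

/-- The dominance order: `Dominates lam mu` means `lam ⊵ mu`. -/
def Dominates (lam mu : ℕ → ℕ) : Prop :=
  ∀ N, ∑ j ∈ Finset.range N, mu j ≤ ∑ j ∈ Finset.range N, lam j

/-- Strict dominance `lam ⊳ mu`. -/
def StrictDominates (lam mu : ℕ → ℕ) : Prop := Dominates lam mu ∧ lam ≠ mu

/-- A `c`-tabloid: a tuple of pairwise disjoint subsets of `{1,…,n}` covering
everything, the `j`-th of size `c j`. -/
structure Tabloid (n : ℕ) (c : ℕ → ℕ) where
  row : ℕ → Finset (Fin n)
  disj : ∀ i j, i ≠ j → Disjoint (row i) (row j)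
  card_row : ∀ j, (row j).card = c j
  cover : ∀ x, ∃ j, x ∈ row j

theorem Tabloid.ext' {n : ℕ} {c : ℕ → ℕ} {T S : Tabloid n c} (h : T.row = S.row) :
    T = S := by
  cases T; cases S; simp_all

/-- The natural action of the symmetric group on tabloids. -/
instance {n : ℕ} {c : ℕ → ℕ} : MulAction (Equiv.Perm (Fin n)) (Tabloid n c) where
  smul σ T :=
    { row := fun j => (T.row j).image σ
      disj := fun i j h => (Finset.disjoint_image σ.injective).mpr (T.disj i j h)
      card_row := fun j => by
        rw [Finset.card_image_of_injective _ σ.injective, T.card_row]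
      cover := fun x => by
        obtain ⟨j, hj⟩ := T.cover (σ⁻¹ x)
        exact ⟨j, Finset.mem_image.mpr ⟨σ⁻¹ x, hj, by simp⟩⟩ }
  one_smul T := Tabloid.ext' (by funext j; exact Finset.image_id)
  mul_smul a b T := Tabloid.ext' (by
    funext j
    show Finset.image (⇑(a * b)) _ = Finset.image ⇑a (Finset.image ⇑b _)
    rw [Finset.image_image]
    rfl)

/-- The Young permutation module `M^c`, as the permutation representation of
`S_n` on the free `F`-module on the set of `c`-tabloids. -/
noncomputable def youngRep (F : Type) [Field F] (n : ℕ) (c : ℕ → ℕ) :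
    Representation F (Equiv.Perm (Fin n)) (Tabloid n c →₀ F) :=
  { toFun := fun g => Finsupp.lmapDomain F F (g • ·)
    map_one' := by ext; simp
    map_mul' := fun x y => by ext; simp [mul_smul] }

/-- `ρ` is a Young module `Y^lam`: an indecomposable direct summand of `M^lam`
which is not a direct summand of any `M^mu` with `mu ⊳ lam`. -/
def IsYoungModuleFor (F : Type) [Field F] (n : ℕ) (lam : ℕ → ℕ)
    {V : Type} [AddCommGroup V] [Module F V]
    (ρ : Representation F (Equiv.Perm (Fin n)) V) : Prop :=
  IsIndecomposableRep ρ ∧ IsRepSummand (youngRep F n lam) ρ ∧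
  ∀ mu : ℕ → ℕ, IsPartitionFn mu n → StrictDominates mu lam →
    ¬ IsRepSummand (youngRep F n mu) ρ

end Young

/-! ## Orbit types, Young subgroups and related combinatorics -/

section Orbits

/-- The orbit type of a subgroup `P ≤ S_n`: the multiset of cardinalities of
the orbits of `P` on `{1,…,n}`. -/
noncomputable def orbitType (n : ℕ) (P : Subgroup (Equiv.Perm (Fin n))) : Multiset ℕ := by
  classical
  exact (Finset.univ.image fun x : Fin n => MulAction.orbit P x).val.map fun s => s.ncard

/-- The multiset of (nonempty) fiber sizes of a labelling `f : {1,…,n} → ℕ`;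
the fibers of `f` are the blocks of a set partition of `{1,…,n}`. -/
noncomputable def fiberSizes {n : ℕ} (f : Fin n → ℕ) : Multiset ℕ := by
  classical
  exact (Finset.univ.image f).val.map fun j => (Finset.univ.filter fun x => f x = j).card

/-- The subgroup of permutations preserving each fiber (block) of the
labelling `f`; for an interval labelling this is a Young subgroup. -/
def blockStabilizer (n : ℕ) (f : Fin n → ℕ) : Subgroup (Equiv.Perm (Fin n)) where
  carrier := {σ | ∀ x, f (σ x) = f x}
  one_mem' := fun _ => rfl
  mul_mem' := by
    intro a b ha hb x
    rw [Equiv.Perm.mul_apply, ha, hb]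
  inv_mem' := by
    intro a ha x
    simpa using (ha (a⁻¹ x)).symm

/-- `P` is a Sylow `p`-subgroup of the subgroup `H`. -/
def IsSylowPSubgroupIn {G : Type} [Group G] (p : ℕ) (P H : Subgroup G) : Prop :=
  P ≤ H ∧ IsPGroup p P ∧ ∀ Q : Subgroup G, IsPGroup p Q → Q ≤ H → P ≤ Q → Q = P

/-- Every member of `O` is a power of `p`. -/
def IsPPowerMultiset (p : ℕ) (O : Multiset ℕ) : Prop := ∀ x ∈ O, ∃ i : ℕ, x = p ^ i

/-- `lamE 0, …, lamE s` is the `p`-adic expansion of the partition `lam`: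
each `lamE i` is a `p`-restricted partition and `lam = Σ_i p^i • lamE i`. -/
def IsPAdicExpansionOf (p : ℕ) (lam : ℕ → ℕ) (s : ℕ) (lamE : ℕ → ℕ → ℕ) : Prop :=
  (∀ i, i ≤ s →
    (Function.support (lamE i)).Finite ∧ Antitone (lamE i) ∧ IsPRestrictedFn p (lamE i)) ∧
  ∀ j, lam j = ∑ i ∈ Finset.range (s + 1), p ^ i * lamE i j

/-- The multiset `O_lam = (1^{|lam(0)|}, p^{|lam(1)|}, …, (p^s)^{|lam(s)|})`
attached to a `p`-adic expansion. -/
noncomputable def pAdicOrbitMultiset (p s : ℕ) (lamE : ℕ → ℕ → ℕ) : Multiset ℕ :=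
  ∑ i ∈ Finset.range (s + 1), Multiset.replicate (∑ᶠ j, lamE i j) (p ^ i)

/-- `O` is a rearrangement of a refinement of `O'`: `O` is a disjoint union of
submultisets, one summing to each element of `O'`. -/
def IsRefinementRearrangement (O O' : Multiset ℕ) : Prop :=
  ∃ C : Multiset (Multiset ℕ), C.map Multiset.sum = O' ∧ C.sum = O

/-- `P` is conjugate to a subgroup of `Q`. -/
def IsConjSubgroup {G : Type} [Group G] (P Q : Subgroup G) : Prop :=
  ∃ g : G, ∀ x ∈ P, g * x * g⁻¹ ∈ Q

/-- An elementary abelian `p`-subgroup. -/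
def IsElementaryAbelian (p : ℕ) {G : Type} [Group G] (E : Subgroup G) : Prop :=
  (∀ x ∈ E, x ^ p = 1) ∧ ∀ x ∈ E, ∀ y ∈ E, x * y = y * x

/-- Every row of the tabloid `T` is a union of fibers (blocks) of `f`. -/
def rowsUnionOfFibers {n : ℕ} {c : ℕ → ℕ} (f : Fin n → ℕ) (T : Tabloid n c) : Prop :=
  ∀ j x y, f x = f y → x ∈ T.row j → y ∈ T.row j

/-- The number `m_{c,O}`: the number of `c`-tabloids each of whose rows is a
union of blocks of the set partition with labelling `f`. -/
noncomputable def mNumber (n : ℕ) (c : ℕ → ℕ) (f : Fin n → ℕ) : ℕ :=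
  Nat.card {T : Tabloid n c // rowsUnionOfFibers f T}

end Orbits

/-! ## Generic Jordan types -/

section Jordan

/-- The nilpotent Jordan block of size `p` over `K`, as an endomorphism of `K^p`. -/
def jordanShift (p : ℕ) (K : Type) [Field K] : (Fin p → K) →ₗ[K] (Fin p → K) where
  toFun v := fun i => if h : i.val + 1 < p then v ⟨i.val + 1, h⟩ else 0
  map_add' x y := by
    funext i
    by_cases h : (i : ℕ) + 1 < p <;> simp [h]
  map_smul' c x := by
    funext i
    by_cases h : (i : ℕ) + 1 < p <;> simp [h]

/-- The rational function field `F(α_1, …, α_k)`. -/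
abbrev RatFuncField (F : Type) [Field F] (k : ℕ) : Type :=
  FractionRing (MvPolynomial (Fin k) F)

/-- The operator `u_α − 1 = Σ_i α_i (ρ(g_i) − 1)` on `K ⊗_F V`, where
`K = F(α_1,…,α_k)`. -/
noncomputable def uAlphaSubOne {F : Type} [Field F] {G : Type} [Group G]
    {V : Type} [AddCommGroup V] [Module F V]
    (ρ : Representation F G V) (k : ℕ) (g : Fin k → G) :
    TensorProduct F (RatFuncField F k) V →ₗ[RatFuncField F k]
      TensorProduct F (RatFuncField F k) V :=
  ∑ i : Fin k,
    (algebraMap (MvPolynomial (Fin k) F) (RatFuncField F k) (MvPolynomial.X i)) •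
      LinearMap.baseChange (RatFuncField F k) (ρ (g i) - LinearMap.id)

end Jordan



/-! ## Auxiliary lemmas for statement 11 -/

section MNumberAux

/-- Assignments of labels to rows with prescribed weighted row sums. -/
def Ksol (α : Type) [Fintype α] (w : α → ℕ) (c : ℕ → ℕ) : Type :=
  {h : α → ℕ // ∀ j, ∑ l ∈ Finset.univ.filter (fun l => h l = j), w l = c j}

lemma exists_equiv_of_multiset_map_eq {α β : Type} [Fintype α] [Fintype β]
    (u : α → ℕ) (w : β → ℕ)
    (h : Multiset.map u Finset.univ.val = Multiset.map w Finset.univ.val) :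
    ∃ e : α ≃ β, ∀ x, w (e x) = u x := by
  classical
  have key : ∀ {γ : Type} (_ : Fintype γ) (g : γ → ℕ) (v : ℕ),
      Fintype.card {x : γ // g x = v} = Multiset.count v (Multiset.map g Finset.univ.val) := by
    intro γ _ g v
    rw [Multiset.count_map, Fintype.card_subtype, Finset.card_def, Finset.filter_val]
    exact congrArg Multiset.card (Multiset.filter_congr fun x _ => eq_comm)
  have hcard : ∀ v : ℕ, Fintype.card {x : α // u x = v} = Fintype.card {y : β // w y = v} := by
    intro v
    rw [key inferInstance u v, key inferInstance w v, h]
  refine ⟨(Equiv.sigmaFiberEquiv u).symm.trans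
      ((Equiv.sigmaCongrRight fun v => Fintype.equivOfCardEq (hcard v)).trans
        (Equiv.sigmaFiberEquiv w)), fun x => ?_⟩
  exact ((Fintype.equivOfCardEq (hcard (u x))) ⟨x, rfl⟩).2

def ksolCongr {α β : Type} [Fintype α] [Fintype β] (w : α → ℕ) (w' : β → ℕ) (e : α ≃ β)
    (hw : ∀ x, w' (e x) = w x) (c : ℕ → ℕ) : Ksol α w c ≃ Ksol β w' c where
  toFun h := ⟨h.1 ∘ e.symm, fun j => by
    rw [← h.2 j]
    exact (Finset.sum_equiv e (fun i => by simp) (fun i _ => (hw i).symm)).symm⟩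
  invFun h := ⟨h.1 ∘ e, fun j => by
    rw [← h.2 j]
    exact Finset.sum_equiv e (fun i => by simp) (fun i _ => (hw i).symm)⟩
  left_inv h := Subtype.ext (by funext x; simp)
  right_inv h := Subtype.ext (by funext x; simp)

lemma nat_split {q a a' b b' : ℕ} (ha : a < q) (ha' : a' < q)
    (h : a + q * b = a' + q * b') : a = a' ∧ b = b' := by
  have hq : 0 < q := lt_of_le_of_lt (Nat.zero_le _) ha
  have h1 : a = a' := by
    have h2 := congrArg (· % q) h
    simpa [Nat.add_mul_mod_self_left, Nat.mod_eq_of_lt ha, Nat.mod_eq_of_lt ha'] using h2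
  refine ⟨h1, ?_⟩
  subst h1
  exact Nat.eq_of_mul_eq_mul_left hq (by omega)

lemma ksol_sum_filter {α β : Type} [Fintype α] [Fintype β] (w1 : α → ℕ) (w2 : β → ℕ)
    (q : ℕ) (h : α ⊕ β → ℕ) (j : ℕ) :
    ∑ l ∈ Finset.univ.filter (fun l => h l = j), Sum.elim w1 (fun l => q * w2 l) l
      = (∑ a ∈ Finset.univ.filter (fun a => h (Sum.inl a) = j), w1 a)
        + q * ∑ b ∈ Finset.univ.filter (fun b => h (Sum.inr b) = j), w2 b := by
  classical
  rw [Finset.sum_filter, Finset.sum_filter, Finset.sum_filter, Fintype.sum_sum_type,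
    Finset.mul_sum]
  simp [mul_ite]

def ksolSum {α β : Type} [Fintype α] [Fintype β] (w1 : α → ℕ) (w2 : β → ℕ) (q : ℕ)
    (lam mu : ℕ → ℕ) (hlam : ∀ j, lam j < q) (hw : ∑ l, w1 l < q) :
    Ksol (α ⊕ β) (Sum.elim w1 (fun l => q * w2 l)) (fun j => lam j + q * mu j) ≃
      Ksol α w1 lam × Ksol β w2 mu := by
  classical
  have hlt : ∀ (h : α ⊕ β → ℕ) (j : ℕ),
      (∑ a ∈ Finset.univ.filter (fun a => h (Sum.inl a) = j), w1 a) < q :=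
    fun h j => lt_of_le_of_lt
      (Finset.sum_le_sum_of_subset (Finset.filter_subset _ _)) hw
  have hsplit : ∀ (h : α ⊕ β → ℕ), (∀ j, ∑ l ∈ Finset.univ.filter (fun l => h l = j),
        Sum.elim w1 (fun l => q * w2 l) l = lam j + q * mu j) →
      ∀ j, (∑ a ∈ Finset.univ.filter (fun a => h (Sum.inl a) = j), w1 a) = lam j ∧
        (∑ b ∈ Finset.univ.filter (fun b => h (Sum.inr b) = j), w2 b) = mu j := by
    intro h hh j
    have := hh j
    rw [ksol_sum_filter] at this
    exact nat_split (hlt h j) (hlam j) this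
  refine
    { toFun := fun h =>
        (⟨fun a => h.1 (Sum.inl a), fun j => (hsplit h.1 h.2 j).1⟩,
         ⟨fun b => h.1 (Sum.inr b), fun j => (hsplit h.1 h.2 j).2⟩)
      invFun := fun p => ⟨Sum.elim p.1.1 p.2.1, fun j => by
        rw [ksol_sum_filter]
        simp only [Sum.elim_inl, Sum.elim_inr]
        exact congrArg₂ (fun a b => a + q * b) (p.1.2 j) (p.2.2 j)⟩
      left_inv := fun h => Subtype.ext (by funext x; cases x <;> rfl)
      right_inv := fun p => Prod.ext (Subtype.ext rfl) (Subtype.ext rfl) }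

lemma card_tabloid (N : ℕ) (c : ℕ → ℕ) (f : Fin N → ℕ) (α : Type) [Fintype α]
    [DecidableEq α] (F : Fin N → α) (hsurj : Function.Surjective F)
    (hfib : ∀ x y, f x = f y ↔ F x = F y) :
    Nat.card {T : Tabloid N c // rowsUnionOfFibers f T}
      = Nat.card (Ksol α (fun a => (Finset.univ.filter fun x => F x = a).card) c) := by
  classical
  set w : α → ℕ := fun a => (Finset.univ.filter fun x => F x = a).card with hwdef
  have key : ∀ (h : α → ℕ) (j : ℕ),
      (Finset.univ.filter fun x => h (F x) = j).card
        = ∑ a ∈ Finset.univ.filter (fun a => h a = j), w a := by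
    intro h j
    rw [Finset.card_eq_sum_card_fiberwise
      (f := F) (t := Finset.univ.filter fun a => h a = j)
      (fun x hx => Finset.mem_filter.mpr ⟨Finset.mem_univ _, (Finset.mem_filter.mp hx).2⟩)]
    refine Finset.sum_congr rfl fun a ha => ?_
    have haj : h a = j := (Finset.mem_filter.mp ha).2
    have hset : ((Finset.univ.filter fun x => h (F x) = j).filter fun x => F x = a)
        = Finset.univ.filter fun x => F x = a := by
      ext x
      simp only [Finset.mem_filter, Finset.mem_univ, true_and]
      constructor
      · rintro ⟨-, hFx⟩
        exact hFx
      · intro hFx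
        exact ⟨by rw [hFx, haj], hFx⟩
    rw [hset]
  have huniq : ∀ (T : Tabloid N c) (x : Fin N) (i j : ℕ),
      x ∈ T.row i → x ∈ T.row j → i = j := by
    intro T x i j hi hj
    by_contra hne
    exact Finset.disjoint_left.mp (T.disj i j hne) hi hj
  apply Nat.card_congr
  apply Equiv.symm
  let tab : Ksol α w c → Tabloid N c := fun h =>
    { row := fun j => Finset.univ.filter fun x => h.1 (F x) = j
      disj := fun i j hij => Finset.disjoint_left.mpr fun x hx hx' =>
        hij ((Finset.mem_filter.mp hx).2.symm.trans (Finset.mem_filter.mp hx').2)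
      card_row := fun j => (key h.1 j).trans (h.2 j)
      cover := fun x => ⟨h.1 (F x), Finset.mem_filter.mpr ⟨Finset.mem_univ x, rfl⟩⟩ }
  have htab_rows : ∀ h, rowsUnionOfFibers f (tab h) := by
    intro h j x y hxy hx
    have hFy : F y = F x := ((hfib x y).mp hxy).symm
    simp only [tab, Finset.mem_filter, Finset.mem_univ, true_and] at hx ⊢
    rw [hFy]
    exact hx
  refine Equiv.ofBijective (fun h => ⟨tab h, htab_rows h⟩) ⟨?_, ?_⟩
  · intro h h' hhh
    have hrows : ∀ x, h.1 (F x) = h'.1 (F x) := by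
      intro x
      have h1 : x ∈ (tab h).row (h.1 (F x)) :=
        Finset.mem_filter.mpr ⟨Finset.mem_univ x, rfl⟩
      have h2 : tab h = tab h' := congrArg Subtype.val hhh
      rw [h2] at h1
      exact ((Finset.mem_filter.mp h1).2).symm ▸ rfl
    apply Subtype.ext
    funext a
    obtain ⟨x, rfl⟩ := hsurj a
    exact hrows x
  · rintro ⟨T, hT⟩
    have hgmem : ∀ x, x ∈ T.row ((T.cover x).choose) := fun x => (T.cover x).choose_spec
    set g : Fin N → ℕ := fun x => (T.cover x).choose with hg
    have hgconst : ∀ x y, F x = F y → g x = g y := by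
      intro x y hxy
      have hy : y ∈ T.row (g x) := hT (g x) x y ((hfib x y).mpr hxy) (hgmem x)
      exact huniq T y (g x) (g y) hy (hgmem y)
    set h : α → ℕ := fun a => g (Function.surjInv hsurj a) with hhdef
    have hhF : ∀ x, h (F x) = g x := fun x =>
      hgconst (Function.surjInv hsurj (F x)) x (Function.surjInv_eq hsurj (F x))
    have hrow : ∀ j, (Finset.univ.filter fun x => h (F x) = j) = T.row j := by
      intro j
      ext x
      simp only [Finset.mem_filter, Finset.mem_univ, true_and, hhF]
      constructor
      · rintro rfl
        exact hgmem x
      · intro hx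
        exact huniq T x (g x) j (hgmem x) hx
    refine ⟨⟨h, fun j => ?_⟩, ?_⟩
    · rw [← key h j, hrow j, T.card_row j]
    · apply Subtype.ext
      apply Tabloid.ext'
      funext j
      exact hrow j

lemma mNumber_eq_card_ksol (N : ℕ) (c : ℕ → ℕ) (f : Fin N → ℕ) :
    mNumber N c f = Nat.card (Ksol ↥(Finset.univ.image f)
      (fun l => (Finset.univ.filter fun x => f x = ↑l).card) c) := by
  classical
  have hF : ∀ x : Fin N, f x ∈ Finset.univ.image f :=
    fun x => Finset.mem_image_of_mem f (Finset.mem_univ x)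
  have hwx : (fun l : ↥(Finset.univ.image f) =>
        (Finset.univ.filter fun x => f x = ↑l).card)
      = fun l => (Finset.univ.filter fun x =>
        (⟨f x, hF x⟩ : ↥(Finset.univ.image f)) = l).card := by
    funext l
    congr 1
    ext x
    simp [Subtype.ext_iff]
  rw [hwx]
  unfold mNumber
  have hsurj : Function.Surjective (fun x => (⟨f x, hF x⟩ : ↥(Finset.univ.image f))) := by
    intro l
    obtain ⟨x, -, hx⟩ := Finset.mem_image.mp l.2
    exact ⟨x, Subtype.ext hx⟩
  have hfib : ∀ x y, f x = f y ↔ (⟨f x, hF x⟩ : ↥(Finset.univ.image f)) = ⟨f y, hF y⟩ :=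
    fun x y => ⟨fun hh => Subtype.ext hh, fun hh => congrArg Subtype.val hh⟩
  have hct := card_tabloid N c f ↥(Finset.univ.image f) (fun x => ⟨f x, hF x⟩) hsurj hfib
  exact hct

lemma map_weight_eq_fiberSizes (N : ℕ) (f : Fin N → ℕ) :
    Multiset.map (fun l : ↥(Finset.univ.image f) =>
        (Finset.univ.filter fun x => f x = ↑l).card)
      Finset.univ.val = fiberSizes f := by
  classical
  have h1 : fiberSizes f = (Finset.univ.image f).val.map
      (fun v => (Finset.univ.filter fun x => f x = v).card) := by
    unfold fiberSizes
    congr!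
  rw [h1, Finset.univ_eq_attach]
  conv_rhs => rw [← Multiset.attach_map_val (Finset.univ.image f).val, Multiset.map_map]
  rfl

lemma map_univ_sum_type {α β : Type} [Fintype α] [Fintype β] (W : α ⊕ β → ℕ) :
    Multiset.map W (Finset.univ.val : Multiset (α ⊕ β))
      = Multiset.map (fun a => W (Sum.inl a)) Finset.univ.val
        + Multiset.map (fun b => W (Sum.inr b)) Finset.univ.val := by
  rw [← Finset.univ_disjSum_univ, Finset.val_disjSum, Multiset.disjSum,
    Multiset.map_add, Multiset.map_map, Multiset.map_map]
  rfl

end MNumberAux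


/-- `m_{lam + p^s mu, O • p^s O'} = m_{lam,O} · m_{mu,O'}` when
`p^s > m`. -/
theorem stmt_11 (p : ℕ) [Fact p.Prime] (m n s : ℕ) (hps : m < p ^ s)
    (lam : ℕ → ℕ) (hlam : IsPartitionFn lam m)
    (mu : ℕ → ℕ) (hmu : IsPartitionFn mu n)
    (O O' : Multiset ℕ) (hO : IsPPowerMultiset p O) (hO' : IsPPowerMultiset p O')
    (hOm : O.sum = m) (hOn : O'.sum = n)
    (f1 : Fin m → ℕ) (hf1 : fiberSizes f1 = O)
    (f2 : Fin n → ℕ) (hf2 : fiberSizes f2 = O')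
    (f3 : Fin (m + p ^ s * n) → ℕ)
    (hf3 : fiberSizes f3 = O + O'.map (fun x => p ^ s * x)) :
    mNumber (m + p ^ s * n) (fun j => lam j + p ^ s * mu j) f3
      = mNumber m lam f1 * mNumber n mu f2 := by
  classical
  have hq0 : 0 < p ^ s := pow_pos (Fact.out (p := p.Prime)).pos s
  rw [mNumber_eq_card_ksol, mNumber_eq_card_ksol, mNumber_eq_card_ksol]
  set w1 : ↥(Finset.univ.image f1) → ℕ :=
    fun l => (Finset.univ.filter fun x => f1 x = ↑l).card with hw1
  set w2 : ↥(Finset.univ.image f2) → ℕ :=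
    fun l => (Finset.univ.filter fun x => f2 x = ↑l).card with hw2
  set w3 : ↥(Finset.univ.image f3) → ℕ :=
    fun l => (Finset.univ.filter fun x => f3 x = ↑l).card with hw3
  have hm1 : Multiset.map w1 Finset.univ.val = O :=
    (map_weight_eq_fiberSizes m f1).trans hf1
  have hm2 : Multiset.map w2 Finset.univ.val = O' :=
    (map_weight_eq_fiberSizes n f2).trans hf2
  have hm3 : Multiset.map w3 Finset.univ.val = O + O'.map (fun x => p ^ s * x) :=
    (map_weight_eq_fiberSizes (m + p ^ s * n) f3).trans hf3
  set W : ↥(Finset.univ.image f1) ⊕ ↥(Finset.univ.image f2) → ℕ :=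
    Sum.elim w1 (fun l => p ^ s * w2 l) with hW
  have hmW : Multiset.map W Finset.univ.val = O + O'.map (fun x => p ^ s * x) := by
    rw [map_univ_sum_type]
    congr 1
    rw [← hm2, Multiset.map_map]
    rfl
  obtain ⟨e, he⟩ := exists_equiv_of_multiset_map_eq W w3 (hmW.trans hm3.symm)
  have hlt : ∀ j, lam j < p ^ s := by
    intro j
    have h1 : lam j ≤ m := by
      have := single_le_finsum j hlam.1.1 (fun k => Nat.zero_le (lam k))
      rw [hlam.1.2] at this
      exact this
    omega
  have hwlt : ∑ l, w1 l < p ^ s := by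
    have h1 : ∑ l, w1 l = O.sum := by
      rw [← hm1]
      rfl
    omega
  calc Nat.card (Ksol _ w3 (fun j => lam j + p ^ s * mu j))
      = Nat.card (Ksol _ W (fun j => lam j + p ^ s * mu j)) :=
        (Nat.card_congr (ksolCongr W w3 e he _)).symm
    _ = Nat.card (Ksol _ w1 lam × Ksol _ w2 mu) :=
        Nat.card_congr (ksolSum w1 w2 (p ^ s) lam mu hlt hwlt)
    _ = _ := by rw [Nat.card_prod]
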